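/- arXiv:1812.03889 — 3 statements merged into one kernel-verified Lean document; each statement's English description precedes it below -/
import Mathlib

section
/- Let σ > 0 and α > 0. Define β*(σ) = σ/2 + √(σ²/4 − α) if σ ≥ 2√α, and β*(σ) = √α otherwise. Then for every β ≥ 0, |σ·β*(σ)/(β*(σ)² + α) − 1| ≤ |σ·β/(β² + α) − 1|. In particular, if σ ≥ 2√α then σ·β*(σ)/(β*(σ)² + α) = 1. -/
theorem optimal_singular_values
    (α σ : ℝ) (hα : 0 < α) (hσ : 0 < σ) :
    let βs : ℝ := if 2 * Real.sqrt α ≤ σ then σ / 2 + Real.sqrt (σ^2 / 4 - α)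
      else Real.sqrt α
    (∀ β : ℝ, 0 ≤ β →
      |σ * βs / (βs^2 + α) - 1| ≤ |σ * β / (β^2 + α) - 1|) ∧
    (2 * Real.sqrt α ≤ σ → σ * βs / (βs^2 + α) = 1) := by
  intro βs
  have hsa : 0 < Real.sqrt α := Real.sqrt_pos.mpr hα
  have hsq : Real.sqrt α ^ 2 = α := Real.sq_sqrt hα.le
  by_cases hc : 2 * Real.sqrt α ≤ σ
  · -- large σ case
    have hβs : βs = σ / 2 + Real.sqrt (σ^2 / 4 - α) := if_pos hc
    have hnn : 0 ≤ σ^2 / 4 - α := by nlinarith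
    have hs2 : Real.sqrt (σ^2 / 4 - α) ^ 2 = σ^2 / 4 - α := Real.sq_sqrt hnn
    have hβpos : 0 < βs := by
      rw [hβs]; have := Real.sqrt_nonneg (σ^2 / 4 - α); linarith
    have key : βs ^ 2 + α = σ * βs := by rw [hβs]; nlinarith
    have hone : σ * βs / (βs^2 + α) = 1 := by
      rw [key]; exact div_self (by positivity)
    refine ⟨fun β hβ => ?_, fun _ => hone⟩
    rw [hone, sub_self, abs_zero]
    exact abs_nonneg _
  · -- small σ case
    have hβs : βs = Real.sqrt α := if_neg hc
    have hσlt : σ < 2 * Real.sqrt α := lt_of_not_ge hc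
    have hden : βs ^ 2 + α = 2 * α := by rw [hβs, hsq]; ring
    have hv : σ * βs / (βs^2 + α) < 1 := by
      rw [hβs, hsq, div_lt_one (by linarith)]
      nlinarith
    refine ⟨fun β hβ => ?_, fun h => absurd h hc⟩
    have hu_le : σ * β / (β^2 + α) ≤ σ * βs / (βs^2 + α) := by
      rw [hβs, hsq, div_le_div_iff₀ (by positivity) (by linarith)]
      have key2 : 2 * α * β ≤ Real.sqrt α * (β^2 + α) := by
        have h := mul_nonneg hsa.le (sq_nonneg (β - Real.sqrt α))
        nlinarith [hsq]
      nlinarith [mul_le_mul_of_nonneg_left key2 hσ.le]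
    calc |σ * βs / (βs^2 + α) - 1| = 1 - σ * βs / (βs^2 + α) := by
          rw [abs_of_nonpos (by linarith)]; ring
      _ ≤ 1 - σ * β / (β^2 + α) := by linarith
      _ ≤ |σ * β / (β^2 + α) - 1| := by
          have := neg_abs_le (σ * β / (β^2 + α) - 1); linarith
end

section
/- Let σ > 0 and α > 0 with β*(σ) = σ/2 + √(σ²/4 − α) for σ ≥ 2√α and β*(σ) = √α otherwise. Then the filter σ·β*(σ)/(β*(σ)² + α) equals 1 when σ ≥ 2√α and equals σ/(2√α) when σ < 2√α. -/
theorem analytic_deep_prior_is_soft_tsvd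
    (α σ : ℝ) (hα : 0 < α) (hσ : 0 < σ) :
    let βs : ℝ := if 2 * Real.sqrt α ≤ σ then σ / 2 + Real.sqrt (σ^2 / 4 - α)
      else Real.sqrt α
    σ * βs / (βs^2 + α) =
      if 2 * Real.sqrt α ≤ σ then 1 else σ / (2 * Real.sqrt α) := by
  intro βs
  have hsa : 0 < Real.sqrt α := Real.sqrt_pos.mpr hα
  by_cases h : 2 * Real.sqrt α ≤ σ
  · simp only [βs, if_pos h]
    set s := Real.sqrt (σ^2 / 4 - α) with hs
    have hnn : 0 ≤ σ^2 / 4 - α := by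
      have : (2 * Real.sqrt α)^2 ≤ σ^2 := by
        apply pow_le_pow_left₀ (by positivity) h
      have hsq : Real.sqrt α ^ 2 = α := Real.sq_sqrt hα.le
      nlinarith
    have hs2 : s^2 = σ^2 / 4 - α := Real.sq_sqrt hnn
    have hspos : 0 < σ / 2 + s := by positivity
    have key : (σ / 2 + s)^2 + α = σ * (σ / 2 + s) := by nlinarith
    rw [key, div_self (by positivity)]
  · simp only [βs, if_neg h]
    have hsq : Real.sqrt α ^ 2 = α := Real.sq_sqrt hα.le
    rw [hsq]
    rw [div_eq_div_iff (by positivity) (by positivity)]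
    nlinarith
end

section
/- Let α > 0 and σ, δ, η > 0 with η sufficiently small. Consider the iteration β_{ℓ+1} = β_ℓ − c(β_ℓ) where c(β) = η·σ·(σ+δ)²·(α + β² − σβ)·(β² − α)/(β² + α)³. If σ < 2√α then β = √α is an attractive fixed point (i.e., c(√α) = 0 and c′(√α) > 0). If σ > 2√α, then both β = σ/2 ± √(σ²/4 − α) are fixed points with c′ > 0 there, while c′(√α) < 0 (so √α is repulsive). -/
lemma deriv_c_adp (α σ δ η : ℝ) (hα : 0 < α) (β : ℝ) :
    deriv (fun β => η * σ * (σ + δ)^2 * (α + β^2 - σ * β) * (β^2 - α) / (β^2 + α)^3) β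
    = ((η * σ * (σ + δ)^2 * (2 * β - σ) * (β^2 - α)
        + η * σ * (σ + δ)^2 * (α + β^2 - σ * β) * (2 * β)) * (β^2 + α)^3
        - η * σ * (σ + δ)^2 * (α + β^2 - σ * β) * (β^2 - α) * (3 * (β^2 + α)^2 * (2 * β)))
      / ((β^2 + α)^3)^2 := by
  have hD : (β^2 + α)^3 ≠ 0 := by positivity
  have h1 : HasDerivAt (fun x : ℝ => α + x^2 - σ * x) (2 * β - σ) β := by
    have := ((hasDerivAt_pow 2 β).const_add α).sub ((hasDerivAt_id β).const_mul σ)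
    simpa [Pi.sub_def] using this
  have h2 : HasDerivAt (fun x : ℝ => x^2 - α) (2 * β) β := by
    simpa using (hasDerivAt_pow 2 β).sub_const α
  have h3 : HasDerivAt (fun x : ℝ => (x^2 + α)^3) (3 * (β^2 + α)^2 * (2 * β)) β := by
    have : HasDerivAt (fun x : ℝ => (x^2 + α)^3) _ β := ((hasDerivAt_pow 2 β).add_const α).pow 3
    convert this using 1
    simp
  have hN : HasDerivAt (fun x : ℝ => η * σ * (σ + δ)^2 * (α + x^2 - σ * x) * (x^2 - α))
      (η * σ * (σ + δ)^2 * (2 * β - σ) * (β^2 - α)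
        + η * σ * (σ + δ)^2 * (α + β^2 - σ * β) * (2 * β)) β := by
    exact (h1.const_mul (η * σ * (σ + δ)^2)).mul h2
  exact (hN.div h3 hD).deriv

theorem fixed_points_of_adp_iteration
    (α σ δ η : ℝ) (hα : 0 < α) (hσ : 0 < σ) (hδ : 0 < δ) (hη : 0 < η) :
    let c : ℝ → ℝ := fun β =>
      η * σ * (σ + δ)^2 * (α + β^2 - σ * β) * (β^2 - α) / (β^2 + α)^3
    (σ < 2 * Real.sqrt α →
      c (Real.sqrt α) = 0 ∧ 0 < deriv c (Real.sqrt α)) ∧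
    (2 * Real.sqrt α < σ →
      (c (σ / 2 + Real.sqrt (σ^2 / 4 - α)) = 0 ∧
        0 < deriv c (σ / 2 + Real.sqrt (σ^2 / 4 - α))) ∧
      (c (σ / 2 - Real.sqrt (σ^2 / 4 - α)) = 0 ∧
        0 < deriv c (σ / 2 - Real.sqrt (σ^2 / 4 - α))) ∧
      deriv c (Real.sqrt α) < 0) := by
  intro c
  have hcf : c = fun β =>
      η * σ * (σ + δ)^2 * (α + β^2 - σ * β) * (β^2 - α) / (β^2 + α)^3 := rfl
  have hK : 0 < η * σ * (σ + δ)^2 := by positivity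
  have ha : 0 < Real.sqrt α := Real.sqrt_pos.2 hα
  have ha2 : Real.sqrt α ^ 2 = α := Real.sq_sqrt hα.le
  set a := Real.sqrt α with ha_def
  constructor
  · intro hlt
    constructor
    · show η * σ * (σ + δ)^2 * (α + a^2 - σ * a) * (a^2 - α) / (a^2 + α)^3 = 0
      rw [ha2]
      simp
    · rw [hcf, deriv_c_adp α σ δ η hα, ha2]
      apply div_pos _ (by positivity)
      have h2 : 0 < 2 * α - σ * a := by nlinarith [mul_lt_mul_of_pos_right hlt ha]
      exact lt_of_lt_of_eq (mul_pos (mul_pos (mul_pos hK h2) (by linarith : (0:ℝ) < 2 * a))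
        (pow_pos (by linarith : (0:ℝ) < α + α) 3)) (by ring)
  · intro hlt
    have hs0 : 0 < σ^2 / 4 - α := by nlinarith [mul_lt_mul_of_pos_right hlt ha]
    have hs : 0 < Real.sqrt (σ^2 / 4 - α) := Real.sqrt_pos.2 hs0
    have hs2 : Real.sqrt (σ^2 / 4 - α) ^ 2 = σ^2 / 4 - α := Real.sq_sqrt hs0.le
    set s := Real.sqrt (σ^2 / 4 - α) with hs_def
    have hslt : s < σ / 2 := by nlinarith
    have hfp : α + (σ / 2 + s)^2 - σ * (σ / 2 + s) = 0 := by linear_combination hs2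
    have hfm : α + (σ / 2 - s)^2 - σ * (σ / 2 - s) = 0 := by linear_combination hs2
    have hgp : (σ / 2 + s)^2 - α = 2 * s^2 + σ * s := by linear_combination -hs2
    have hgm : (σ / 2 - s)^2 - α = 2 * s^2 - σ * s := by linear_combination -hs2
    refine ⟨⟨?_, ?_⟩, ⟨?_, ?_⟩, ?_⟩
    · show η * σ * (σ + δ)^2 * (α + (σ / 2 + s)^2 - σ * (σ / 2 + s)) * ((σ / 2 + s)^2 - α)
        / ((σ / 2 + s)^2 + α)^3 = 0
      rw [hfp]; simp
    · rw [hcf, deriv_c_adp α σ δ η hα, hfp, hgp]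
      apply div_pos _ (by positivity)
      have hpos : 0 < 2 * s^2 + σ * s := by nlinarith [mul_pos hs hs]
      exact lt_of_lt_of_eq (mul_pos (mul_pos (mul_pos hK (by linarith : (0:ℝ) < 2 * s)) hpos)
        (pow_pos (by positivity : (0:ℝ) < (σ / 2 + s)^2 + α) 3)) (by ring)
    · show η * σ * (σ + δ)^2 * (α + (σ / 2 - s)^2 - σ * (σ / 2 - s)) * ((σ / 2 - s)^2 - α)
        / ((σ / 2 - s)^2 + α)^3 = 0
      rw [hfm]; simp
    · rw [hcf, deriv_c_adp α σ δ η hα, hfm, hgm]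
      apply div_pos _ (by positivity)
      have hpos : 0 < 2 * s * s * (σ - 2 * s) := by nlinarith [mul_pos hs hs]
      exact lt_of_lt_of_eq (mul_pos (mul_pos hK hpos)
        (pow_pos (by positivity : (0:ℝ) < (σ / 2 - s)^2 + α) 3)) (by ring)
    · rw [hcf, deriv_c_adp α σ δ η hα, ha2]
      apply div_neg_of_neg_of_pos _ (by positivity)
      have h2 : 0 < σ * a - 2 * α := by nlinarith [mul_lt_mul_of_pos_right hlt ha]
      rw [← neg_pos]
      exact lt_of_lt_of_eq (mul_pos (mul_pos (mul_pos hK h2) (by linarith : (0:ℝ) < 2 * a))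
        (pow_pos (by linarith : (0:ℝ) < α + α) 3)) (by ring)
end
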